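/- arXiv:2107.12484 — 8 statements merged into one kernel-verified Lean document; each statement's English description precedes it below -/
import Mathlib

section
/- If γ < 1 and (Δ, Λ) is a valid nonzero trade (Δ ≠ 0 or Λ − Δ ≠ 0 with Δ having a positive entry), then the post-trade trading function value strictly increases: φ(R + Δ − Λ) > φ(R). -/
/-- If `γ < 1` and `(Δ, Λ)` is a valid nonzero trade (with `Δ ≠ 0`), then the
post-trade trading function value strictly increases: `φ(R + Δ − Λ) > φ(R)`. -/
theorem trade_increases_function_value {n : ℕ}
    (φ : (Fin n → ℝ) → ℝ)
    (hmono : ∀ x y : Fin n → ℝ, (∀ i, x i ≤ y i) → x ≠ y → φ x < φ y)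
    (γ : ℝ) (hγ : γ ∈ Set.Ioo (0 : ℝ) 1)
    (R Δ Λ : Fin n → ℝ)
    (hR : ∀ i, 0 ≤ R i) (hΔ : ∀ i, 0 ≤ Δ i) (hΛ : ∀ i, 0 ≤ Λ i)
    (hΔne : Δ ≠ 0)
    (hvalid : φ (R + γ • Δ - Λ) = φ R) :
    φ (R + Δ - Λ) > φ R := by
  rw [← hvalid]
  apply hmono
  · intro i
    simp only [Pi.add_apply, Pi.sub_apply, Pi.smul_apply, smul_eq_mul]
    nlinarith [hΔ i, hγ.1, hγ.2]
  · intro h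
    apply hΔne
    funext i
    have h2 := congrFun h i
    simp only [Pi.add_apply, Pi.sub_apply, Pi.smul_apply, smul_eq_mul, Pi.zero_apply] at h2 ⊢
    have := hγ.2
    nlinarith
end

section
/- For a valid trade (Δ, Λ) with respect to a differentiable concave trading function φ, the function value increase satisfies φ(R⁺) ≥ φ(R) + (1−γ)·∇φ(R⁺)ᵀΔ, where R⁺ = R + Δ − Λ. -/
open Filter Topology RealInnerProductSpace

lemma concave_gradient_ineq {n : ℕ} {S : Set (EuclideanSpace ℝ (Fin n))}
    (φ : EuclideanSpace ℝ (Fin n) → ℝ) (hconc : ConcaveOn ℝ S φ)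
    {x y : EuclideanSpace ℝ (Fin n)} (hx : x ∈ S) (hy : y ∈ S)
    {g : EuclideanSpace ℝ (Fin n)} (hg : HasGradientAt φ g x) :
    φ y ≤ φ x + ⟪g, y - x⟫ := by
  set v := y - x with hv
  have hline : HasDerivAt (fun t : ℝ => φ (x + t • v)) ⟪g, v⟫ 0 := by
    have haff : HasDerivAt (fun t : ℝ => x + t • v) v 0 := by
      simpa using ((hasDerivAt_id (0:ℝ)).smul_const v).const_add x
    have hF : HasFDerivAt φ ((InnerProductSpace.toDual ℝ _) g) (x + (0:ℝ) • v) := by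
      simp only [zero_smul, add_zero]; exact hg.hasFDerivAt
    have := hF.comp_hasDerivAt 0 haff
    simpa [InnerProductSpace.toDual_apply_apply, Function.comp_def] using this
  have hslope : Tendsto (slope (fun t : ℝ => φ (x + t • v)) 0) (𝓝[>] 0)
      (𝓝 ⟪g, v⟫) :=
    (hasDerivAt_iff_tendsto_slope.mp hline).mono_left
      (nhdsWithin_mono 0 (fun t ht => ne_of_gt ht))
  have key : ∀ᶠ t in 𝓝[>] (0:ℝ),
      φ y - φ x ≤ slope (fun t : ℝ => φ (x + t • v)) 0 t := by
    filter_upwards [Ioo_mem_nhdsGT_of_mem (Set.left_mem_Ico.mpr one_pos)]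
      with t ht
    have ht0 : 0 < t := ht.1
    have ht1 : t ≤ 1 := le_of_lt ht.2
    have hcomb := hconc.2 hx hy (by linarith : (0:ℝ) ≤ 1 - t) ht0.le
      (by ring : (1 - t) + t = 1)
    have hpt : (1 - t) • x + t • y = x + t • v := by
      simp only [hv]; module
    rw [hpt] at hcomb
    simp only [smul_eq_mul] at hcomb
    have : φ y - φ x ≤ (φ (x + t • v) - φ x) / t := by
      rw [le_div_iff₀ ht0]; nlinarith
    simpa [slope_def_field, div_eq_inv_mul] using this
  have hle : φ y - φ x ≤ ⟪g, v⟫ := ge_of_tendsto hslope key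
  linarith

/-- For a valid trade `(Δ, Λ)` w.r.t. a differentiable concave trading function `φ`,
`φ(R⁺) ≥ φ(R) + (1−γ)·∇φ(R⁺)ᵀΔ`, where `R⁺ = R + Δ − Λ`. -/
theorem trade_function_value_increase_bound {n : ℕ}
    (φ : EuclideanSpace ℝ (Fin n) → ℝ)
    (g : EuclideanSpace ℝ (Fin n) → EuclideanSpace ℝ (Fin n))
    (hconc : ConcaveOn ℝ {x : EuclideanSpace ℝ (Fin n) | ∀ i, 0 ≤ x i} φ)
    (hgrad : ∀ x, (∀ i, 0 ≤ x i) → HasGradientAt φ (g x) x)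
    (hmono : ∀ x y : EuclideanSpace ℝ (Fin n), (∀ i, x i ≤ y i) → φ x ≤ φ y)
    (γ : ℝ) (hγ : γ ∈ Set.Ioc (0 : ℝ) 1)
    (R Δ Λ : EuclideanSpace ℝ (Fin n))
    (hR : ∀ i, 0 ≤ R i) (hΔ : ∀ i, 0 ≤ Δ i) (hΛ : ∀ i, 0 ≤ Λ i)
    (hdom : ∀ i, 0 ≤ (R + γ • Δ - Λ) i)
    (hdom' : ∀ i, 0 ≤ (R + Δ - Λ) i)
    (hvalid : φ (R + γ • Δ - Λ) = φ R) :
    φ (R + Δ - Λ) ≥ φ R + (1 - γ) * ∑ i, g (R + Δ - Λ) i * Δ i := by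
  set x := R + Δ - Λ with hx
  set y := R + γ • Δ - Λ with hy
  have h := concave_gradient_ineq φ hconc (S := {x | ∀ i, 0 ≤ x i})
    hdom' hdom (hgrad x hdom')
  have hsub : y - x = (γ - 1) • Δ := by
    simp only [hx, hy]; module
  rw [hsub] at h
  have hinner : ⟪g x, (γ - 1) • Δ⟫ = (γ - 1) * ∑ i, g x i * Δ i := by
    rw [real_inner_smul_right, PiLp.inner_apply]
    simp [RCLike.inner_apply, mul_comm]
  rw [hinner, hvalid] at h
  linarith
end

section
/- For a valid trade (Δ, Λ), the trading cost is positive: Pᵀ(Δ − Λ) ≥ (1−γ)·PᵀΔ, where P = ∇φ(R). In particular, if γ < 1 and PᵀΔ > 0, the trader's holdings strictly decrease in value at current unscaled prices. -/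
/-- For a valid trade `(Δ, Λ)`, the trading cost is positive:
`Pᵀ(Δ − Λ) ≥ (1−γ)·PᵀΔ` where `P = ∇φ(R)`; in particular, if `γ < 1` and
`PᵀΔ > 0`, the trader's holdings strictly decrease in value. -/
theorem trading_cost_positive {n : ℕ}
    (φ : EuclideanSpace ℝ (Fin n) → ℝ)
    (g : EuclideanSpace ℝ (Fin n) → EuclideanSpace ℝ (Fin n))
    (hconc : ConcaveOn ℝ {x : EuclideanSpace ℝ (Fin n) | ∀ i, 0 ≤ x i} φ)
    (hgrad : ∀ x, (∀ i, 0 ≤ x i) → HasGradientAt φ (g x) x)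
    (hmono : ∀ x y : EuclideanSpace ℝ (Fin n), (∀ i, x i ≤ y i) → φ x ≤ φ y)
    (γ : ℝ) (hγ : γ ∈ Set.Ioc (0 : ℝ) 1)
    (R Δ Λ : EuclideanSpace ℝ (Fin n))
    (hP : ∀ i, 0 < g R i)
    (hR : ∀ i, 0 ≤ R i) (hΔ : ∀ i, 0 ≤ Δ i) (hΛ : ∀ i, 0 ≤ Λ i)
    (hdom : ∀ i, 0 ≤ (R + γ • Δ - Λ) i)
    (hvalid : φ (R + γ • Δ - Λ) = φ R) :
    (∑ i, g R i * (Δ i - Λ i) ≥ (1 - γ) * ∑ i, g R i * Δ i) ∧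
    (γ < 1 → 0 < ∑ i, g R i * Δ i → ∑ i, g R i * (Λ i - Δ i) < 0) := by
  set y : EuclideanSpace ℝ (Fin n) := R + γ • Δ - Λ with hy
  set v : EuclideanSpace ℝ (Fin n) := y - R with hv
  -- derivative of t ↦ φ (R + t • v) at 0 is ⟪g R, v⟫
  have hF : HasFDerivAt φ ((InnerProductSpace.toDual ℝ _) (g R)) R := hgrad R hR
  have hline : HasDerivAt (fun t : ℝ => R + t • v) v 0 := by
    simpa using ((hasDerivAt_id (0:ℝ)).smul_const v).const_add R
  have hd : HasDerivAt (fun t : ℝ => φ (R + t • v))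
      (inner ℝ (g R) v : ℝ) 0 := by
    have h0 : R = R + (0:ℝ) • v := by simp
    rw [h0] at hF
    have := hF.comp_hasDerivAt (f := fun t : ℝ => R + t • v) 0 hline
    simp only [InnerProductSpace.toDual_apply_apply, zero_smul, add_zero] at this
    exact this
  -- φ(R + t•v) ≥ φ R for t ∈ [0,1]
  have hmem_y : y ∈ {x : EuclideanSpace ℝ (Fin n) | ∀ i, 0 ≤ x i} := hdom
  have hmem_R : R ∈ {x : EuclideanSpace ℝ (Fin n) | ∀ i, 0 ≤ x i} := hR
  have hineq : ∀ t : ℝ, t ∈ Set.Ioc (0:ℝ) 1 →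
      φ R ≤ φ (R + t • v) := by
    intro t ht
    have hcomb := hconc.2 hmem_R hmem_y (show (0:ℝ) ≤ 1 - t by linarith [ht.2])
      (le_of_lt ht.1) (by ring)
    have hx : (1 - t) • R + t • y = R + t • v := by
      rw [hv]; module
    rw [hx, hvalid] at hcomb
    calc φ R = (1 - t) * φ R + t * φ R := by ring
    _ ≤ φ (R + t • v) := hcomb
  -- derivative nonneg
  have hslope : (0:ℝ) ≤ (inner ℝ (g R) v : ℝ) := by
    have htend : Filter.Tendsto (slope (fun t : ℝ => φ (R + t • v)) 0)
        (nhdsWithin 0 {(0:ℝ)}ᶜ) (nhds (inner ℝ (g R) v : ℝ)) :=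
      hasDerivAt_iff_tendsto_slope.mp hd
    have htend' : Filter.Tendsto (slope (fun t : ℝ => φ (R + t • v)) 0)
        (nhdsWithin 0 (Set.Ioi 0)) (nhds (inner ℝ (g R) v : ℝ)) :=
      htend.mono_left (nhdsWithin_mono _ (fun x hx => ne_of_gt hx))
    refine ge_of_tendsto htend' ?_
    filter_upwards [Ioc_mem_nhdsGT_of_mem (by norm_num : (0:ℝ) ∈ Set.Ico 0 1)] with t ht
    have h1 := hineq t ht
    have h2 : φ (R + (0:ℝ) • v) = φ R := by simp
    rw [slope_def_field]
    simp only [sub_zero, h2]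
    have := ht.1
    exact div_nonneg (by linarith) (le_of_lt ht.1)
  have hsum : (inner ℝ (g R) v : ℝ) = ∑ i, g R i * (γ * Δ i - Λ i) := by
    rw [hv, hy]
    simp only [PiLp.inner_apply, RCLike.inner_apply, conj_trivial, PiLp.sub_apply,
      PiLp.add_apply, PiLp.smul_apply, smul_eq_mul]
    exact Finset.sum_congr rfl fun i _ => by ring
  rw [hsum] at hslope
  have hA : ∑ i, g R i * (Δ i - Λ i) - (1 - γ) * ∑ i, g R i * Δ i
      = ∑ i, g R i * (γ * Δ i - Λ i) := by
    rw [Finset.mul_sum, ← Finset.sum_sub_distrib]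
    exact Finset.sum_congr rfl fun i _ => by ring
  have hB : ∑ i, g R i * (Λ i - Δ i) = -∑ i, g R i * (Δ i - Λ i) := by
    rw [← Finset.sum_neg_distrib]
    exact Finset.sum_congr rfl fun i _ => by ring
  constructor
  · linarith
  · intro h1 h2
    have := mul_pos (by linarith : (0:ℝ) < 1 - γ) h2
    linarith
end

section
/- The forward exchange function F of a CFMM is concave: if φ is concave and differentiable, and F(δ) is defined implicitly by φ(R + γδeᵢ − F(δ)eⱼ) = φ(R), then for all δ, δ′ ≥ 0 in the domain, F(δ′) ≤ F(δ) + F′(δ)(δ′ − δ), where F′(δ) = γ∇φ(R′)ᵢ/∇φ(R′)ⱼ with R′ = R + γδeᵢ − F(δ)eⱼ. -/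
local notation "⟪" x ", " y "⟫" => @inner ℝ _ _ x y

lemma concave_grad_ineq {E : Type*} [NormedAddCommGroup E] [InnerProductSpace ℝ E]
    [CompleteSpace E]
    {s : Set E} {φ : E → ℝ} (hconc : ConcaveOn ℝ s φ) {x y : E} (hx : x ∈ s) (hy : y ∈ s)
    {G : E} (hG : HasGradientAt φ G x) : φ y ≤ φ x + ⟪G, y - x⟫ := by
  set ψ : ℝ → ℝ := fun t => φ (x + t • (y - x)) with hψdef
  have hL : HasDerivAt (fun t : ℝ => x + t • (y - x)) (y - x) 0 := by
    simpa using ((hasDerivAt_id (0:ℝ)).smul_const (y - x)).const_add x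
  have hψ : HasDerivAt ψ ⟪G, y - x⟫ 0 := by
    have h0 : x + (0:ℝ) • (y - x) = x := by simp
    have hFd : HasFDerivAt φ (InnerProductSpace.toDual ℝ E G) (x + (0:ℝ) • (y - x)) := by
      rw [h0]; exact hG.hasFDerivAt
    have hc := hFd.comp_hasDerivAt 0 hL
    simp only [InnerProductSpace.toDual_apply_apply] at hc
    exact hc
  have hslope : ∀ t ∈ Set.Ioo (0:ℝ) 1, φ y - φ x ≤ slope ψ 0 t := by
    intro t ht
    have hcomb : ψ t ≥ (1 - t) * φ x + t * φ y := by
      have h2 := hconc.2 hx hy (by linarith [ht.2] : (0:ℝ) ≤ 1 - t) (le_of_lt ht.1)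
        (by ring)
      have hxy : (1 - t) • x + t • y = x + t • (y - x) := by
        rw [smul_sub, sub_smul]; module
      simpa [hxy] using h2
    have hψ0 : ψ 0 = φ x := by simp [hψdef]
    rw [slope_def_field, sub_zero, le_div_iff₀ ht.1]
    nlinarith [ht.1, ht.2]
  have hmem : Set.Ioo (0:ℝ) 1 ∈ nhdsWithin (0:ℝ) (Set.Ioi 0) :=
    Ioo_mem_nhdsGT_of_mem ⟨le_refl 0, one_pos⟩
  have htend : Filter.Tendsto (slope ψ 0) (nhdsWithin (0:ℝ) (Set.Ioi 0)) (nhds ⟪G, y - x⟫) :=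
    (hasDerivAt_iff_tendsto_slope.mp hψ).mono_left
      (nhdsWithin_mono 0 (fun t ht => ne_of_gt ht))
  have := ge_of_tendsto htend (Filter.eventually_of_mem hmem hslope)
  linarith

/-- The forward exchange function `F` of a CFMM is concave: its first-order
Taylor approximation at any point is a global upper bound. -/
theorem forward_exchange_concave {n : ℕ}
    (φ : EuclideanSpace ℝ (Fin n) → ℝ)
    (g : EuclideanSpace ℝ (Fin n) → EuclideanSpace ℝ (Fin n))
    (hconc : ConcaveOn ℝ {x : EuclideanSpace ℝ (Fin n) | ∀ i, 0 ≤ x i} φ)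
    (hgrad : ∀ x, (∀ i, 0 ≤ x i) → HasGradientAt φ (g x) x)
    (hmono : ∀ x y : EuclideanSpace ℝ (Fin n), (∀ i, x i ≤ y i) → x ≠ y → φ x < φ y)
    (hgpos : ∀ x : EuclideanSpace ℝ (Fin n), (∀ i, 0 ≤ x i) → ∀ k, 0 < g x k)
    (γ : ℝ) (hγ : γ ∈ Set.Ioc (0 : ℝ) 1)
    (i j : Fin n) (hij : i ≠ j)
    (R : EuclideanSpace ℝ (Fin n)) (hR : ∀ k, 0 ≤ R k)
    (Dom : Set ℝ) (hDom : Dom ⊆ Set.Ici 0)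
    (F : ℝ → ℝ)
    (hF : ∀ δ ∈ Dom, 0 ≤ F δ ∧
      (∀ k, 0 ≤ (R + (γ * δ) • EuclideanSpace.single i (1 : ℝ)
        - F δ • EuclideanSpace.single j (1 : ℝ)) k) ∧
      φ (R + (γ * δ) • EuclideanSpace.single i (1 : ℝ)
        - F δ • EuclideanSpace.single j (1 : ℝ)) = φ R) :
    ∀ δ ∈ Dom, ∀ δ' ∈ Dom,
      F δ' ≤ F δ +
        (γ * g (R + (γ * δ) • EuclideanSpace.single i (1 : ℝ)
            - F δ • EuclideanSpace.single j (1 : ℝ)) i /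
          g (R + (γ * δ) • EuclideanSpace.single i (1 : ℝ)
            - F δ • EuclideanSpace.single j (1 : ℝ)) j) * (δ' - δ) := by
  intro δ hδ δ' hδ'
  set x : EuclideanSpace ℝ (Fin n) := R + (γ * δ) • EuclideanSpace.single i (1 : ℝ)
    - F δ • EuclideanSpace.single j (1 : ℝ) with hxdef
  set y : EuclideanSpace ℝ (Fin n) := R + (γ * δ') • EuclideanSpace.single i (1 : ℝ)
    - F δ' • EuclideanSpace.single j (1 : ℝ) with hydef
  obtain ⟨hFδ, hxpos, hφx⟩ := hF δ hδ
  obtain ⟨hFδ', hypos, hφy⟩ := hF δ' hδ'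
  have key := concave_grad_ineq hconc (s := {x : EuclideanSpace ℝ (Fin n) | ∀ i, 0 ≤ x i})
    hxpos hypos (hgrad x hxpos)
  have hyx : y - x = (γ * δ' - γ * δ) • EuclideanSpace.single i (1 : ℝ)
      - (F δ' - F δ) • EuclideanSpace.single j (1 : ℝ) := by
    rw [hxdef, hydef]; module
  have hinner : ⟪g x, y - x⟫ = (γ * δ' - γ * δ) * g x i - (F δ' - F δ) * g x j := by
    rw [hyx, inner_sub_right, real_inner_smul_right, real_inner_smul_right,
      EuclideanSpace.inner_single_right, EuclideanSpace.inner_single_right]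
    simp [mul_comm]
  have h0 : 0 ≤ (γ * δ' - γ * δ) * g x i - (F δ' - F δ) * g x j := by
    rw [← hinner]; rw [hφx, hφy] at key; linarith
  have gjpos : 0 < g x j := hgpos x hxpos j
  have h2 : F δ' - F δ ≤ γ * g x i / g x j * (δ' - δ) := by
    rw [div_mul_eq_mul_div, le_div_iff₀ gjpos]; nlinarith
  linarith
end

section
/- The forward exchange function is bounded above by the exchange-rate line: F(δ) ≤ E·δ for all δ ≥ 0, where E = γ∇φ(R)ᵢ/∇φ(R)ⱼ is the exchange rate. -/
/-- The forward exchange function is bounded above by the exchange-rate line: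
`F(δ) ≤ E·δ` with `E = γ∇φ(R)ᵢ/∇φ(R)ⱼ`. -/
theorem forward_exchange_rate_bound {n : ℕ}
    (φ : EuclideanSpace ℝ (Fin n) → ℝ)
    (g : EuclideanSpace ℝ (Fin n) → EuclideanSpace ℝ (Fin n))
    (hconc : ConcaveOn ℝ {x : EuclideanSpace ℝ (Fin n) | ∀ i, 0 ≤ x i} φ)
    (hgrad : ∀ x, (∀ i, 0 ≤ x i) → HasGradientAt φ (g x) x)
    (hmono : ∀ x y : EuclideanSpace ℝ (Fin n), (∀ i, x i ≤ y i) → x ≠ y → φ x < φ y)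
    (γ : ℝ) (hγ : γ ∈ Set.Ioc (0 : ℝ) 1)
    (i j : Fin n) (hij : i ≠ j)
    (R : EuclideanSpace ℝ (Fin n)) (hR : ∀ k, 0 ≤ R k)
    (hgpos : ∀ k, 0 < g R k)
    (Dom : Set ℝ) (hDom : Dom ⊆ Set.Ici 0)
    (F : ℝ → ℝ) (hF0 : F 0 = 0)
    (hF : ∀ δ ∈ Dom, 0 ≤ F δ ∧
      (∀ k, 0 ≤ (R + (γ * δ) • EuclideanSpace.single i (1 : ℝ)
        - F δ • EuclideanSpace.single j (1 : ℝ)) k) ∧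
      φ (R + (γ * δ) • EuclideanSpace.single i (1 : ℝ)
        - F δ • EuclideanSpace.single j (1 : ℝ)) = φ R) :
    ∀ δ ∈ Dom, F δ ≤ (γ * g R i / g R j) * δ := by
  intro δ hδ
  obtain ⟨hFnn, hynn, hφy⟩ := hF δ hδ
  set y : EuclideanSpace ℝ (Fin n) :=
    R + (γ * δ) • EuclideanSpace.single i (1 : ℝ)
      - F δ • EuclideanSpace.single j (1 : ℝ) with hy
  -- the affine path from R to y
  set L : ℝ →ᵃ[ℝ] EuclideanSpace ℝ (Fin n) := AffineMap.lineMap R y with hL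
  have hψ : ConcaveOn ℝ (L ⁻¹' {x : EuclideanSpace ℝ (Fin n) | ∀ i, 0 ≤ x i}) (φ ∘ L) :=
    hconc.comp_affineMap L
  have h0 : (0 : ℝ) ∈ L ⁻¹' {x : EuclideanSpace ℝ (Fin n) | ∀ i, 0 ≤ x i} := by
    simpa [hL, AffineMap.lineMap_apply_zero] using hR
  have h1 : (1 : ℝ) ∈ L ⁻¹' {x : EuclideanSpace ℝ (Fin n) | ∀ i, 0 ≤ x i} := by
    simpa [hL, AffineMap.lineMap_apply_one] using hynn
  -- derivative of φ ∘ L at 0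
  have hline : HasDerivAt (fun t : ℝ => L t) (y - R) 0 := by
    have : HasDerivAt (fun t : ℝ => t • (y - R) + R) ((1 : ℝ) • (y - R)) 0 :=
      ((hasDerivAt_id (0 : ℝ)).smul_const (y - R)).add_const R
    simpa [hL, AffineMap.lineMap_apply, vsub_eq_sub, vadd_eq_add, add_comm] using this
  have hFd : HasFDerivAt φ (InnerProductSpace.toDual ℝ _ (g R) :
      EuclideanSpace ℝ (Fin n) →L[ℝ] ℝ) R := (hgrad R hR)
  have hd : HasDerivAt (φ ∘ L) (inner ℝ (g R) (y - R) : ℝ) 0 := by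
    have hL0 : L (0 : ℝ) = R := by simp [hL]
    have hFd' : HasFDerivAt φ (InnerProductSpace.toDual ℝ _ (g R) :
        EuclideanSpace ℝ (Fin n) →L[ℝ] ℝ) (L 0) := by rw [hL0]; exact hFd
    have h := hFd'.comp_hasDerivAt 0 hline
    simpa [InnerProductSpace.toDual_apply_apply] using h
  -- gradient inequality: 0 = slope ≤ derivative
  have hkey : (0 : ℝ) ≤ (inner ℝ (g R) (y - R) : ℝ) := by
    have := hψ.slope_le_of_hasDerivAt h0 h1 one_pos hd
    have hs : slope (φ ∘ L) 0 1 = 0 := by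
      simp [slope_def_field, hL, AffineMap.lineMap_apply_zero, AffineMap.lineMap_apply_one,
        Function.comp, hφy]
    rw [hs] at this
    exact this
  -- compute the inner product
  have hinner : (inner ℝ (g R) (y - R) : ℝ) = γ * δ * g R i - F δ * g R j := by
    have : y - R = (γ * δ) • EuclideanSpace.single i (1 : ℝ)
        - F δ • EuclideanSpace.single j (1 : ℝ) := by
      rw [hy]; abel
    rw [this, inner_sub_right, real_inner_smul_right, real_inner_smul_right,
      EuclideanSpace.inner_single_right, EuclideanSpace.inner_single_right]
    simp only [RCLike.star_def, conj_trivial]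
    ring
  rw [hinner] at hkey
  have hj := hgpos j
  rw [div_mul_eq_mul_div, le_div_iff₀ hj]
  nlinarith [hkey]
end

section
/- The reverse exchange function is bounded below by the inverse exchange rate: G(λ) ≥ γ⁻²Eⱼᵢ·λ = λ·∇φ(R)ⱼ/(γ∇φ(R)ᵢ) for all λ ≥ 0 where G(λ) is finite. -/
/-- One-sided derivative nonnegativity: if `f 0 ≤ f t` on `[0,1]` and `f` has
derivative `d` at `0`, then `0 ≤ d`. -/
lemma deriv_nonneg_of_min {f : ℝ → ℝ} {d : ℝ}
    (hd : HasDerivAt f d 0) (hmin : ∀ t ∈ Set.Icc (0:ℝ) 1, f 0 ≤ f t) : 0 ≤ d := by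
  have hd' := (hd.hasDerivWithinAt (s := Set.Ioi (0:ℝ)))
  rw [hasDerivWithinAt_iff_tendsto_slope] at hd'
  have hne : Set.Ioi (0:ℝ) \ {0} = Set.Ioi 0 := by
    ext t; simp +contextual [lt_irrefl, ne_of_gt]
  rw [hne] at hd'
  refine ge_of_tendsto hd' ?_
  have h1 : Set.Ioo (-1 : ℝ) 1 ∈ nhdsWithin (0:ℝ) (Set.Ioi 0) :=
    nhdsWithin_le_nhds (Ioo_mem_nhds (by norm_num) (by norm_num))
  filter_upwards [h1, self_mem_nhdsWithin] with t ht ht0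
  have ht0' : (0:ℝ) < t := ht0
  have : f 0 ≤ f t := hmin t ⟨le_of_lt ht0', le_of_lt ht.2⟩
  rw [slope_def_field]
  apply div_nonneg (by linarith) (by linarith)

/-- The reverse exchange function is bounded below by the inverse exchange-rate
line: `G(λ) ≥ λ·∇φ(R)ⱼ/(γ∇φ(R)ᵢ)` wherever `G` is finite. -/
theorem reverse_exchange_rate_bound {n : ℕ}
    (φ : EuclideanSpace ℝ (Fin n) → ℝ)
    (g : EuclideanSpace ℝ (Fin n) → EuclideanSpace ℝ (Fin n))
    (hconc : ConcaveOn ℝ {x : EuclideanSpace ℝ (Fin n) | ∀ i, 0 ≤ x i} φ)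
    (hgrad : ∀ x, (∀ i, 0 ≤ x i) → HasGradientAt φ (g x) x)
    (hmono : ∀ x y : EuclideanSpace ℝ (Fin n), (∀ i, x i ≤ y i) → x ≠ y → φ x < φ y)
    (γ : ℝ) (hγ : γ ∈ Set.Ioc (0 : ℝ) 1)
    (i j : Fin n) (hij : i ≠ j)
    (R : EuclideanSpace ℝ (Fin n)) (hR : ∀ k, 0 ≤ R k)
    (hgpos : ∀ k, 0 < g R k)
    (Dom : Set ℝ) (hDom : Dom ⊆ Set.Ici 0)
    (G : ℝ → ℝ)
    (hG : ∀ lam ∈ Dom, 0 ≤ G lam ∧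
      (∀ k, 0 ≤ (R + (γ * G lam) • EuclideanSpace.single i (1 : ℝ)
        - lam • EuclideanSpace.single j (1 : ℝ)) k) ∧
      φ (R + (γ * G lam) • EuclideanSpace.single i (1 : ℝ)
        - lam • EuclideanSpace.single j (1 : ℝ)) = φ R) :
    ∀ lam ∈ Dom, G lam ≥ lam * g R j / (γ * g R i) := by
  intro lam hlam
  obtain ⟨hGnn, hynn, hyval⟩ := hG lam hlam
  set v : EuclideanSpace ℝ (Fin n) :=
    (γ * G lam) • EuclideanSpace.single i (1 : ℝ)
      - lam • EuclideanSpace.single j (1 : ℝ) with hv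
  set y : EuclideanSpace ℝ (Fin n) := R + v with hy
  -- the function along the segment
  have hline : HasDerivAt (fun t : ℝ => R + t • v) v 0 := by
    simpa using ((hasDerivAt_id (0:ℝ)).smul_const v).const_add R
  have hF : HasFDerivAt φ ((InnerProductSpace.toDual ℝ _) (g R)) R :=
    (hasGradientAt_iff_hasFDerivAt).mp (hgrad R hR)
  have hF' : HasFDerivAt φ ((InnerProductSpace.toDual ℝ _) (g R)) (R + (0:ℝ) • v) := by
    simpa using hF
  have hd : HasDerivAt (fun t : ℝ => φ (R + t • v)) (inner ℝ (g R) v : ℝ) 0 := by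
    have := hF'.comp_hasDerivAt (0:ℝ) hline
    simp only [InnerProductSpace.toDual_apply_apply] at this; exact this
  -- minimality on [0,1] from concavity
  have hmin : ∀ t ∈ Set.Icc (0:ℝ) 1, φ (R + (0:ℝ) • v) ≤ φ (R + t • v) := by
    intro t ht
    have hRmem : R ∈ {x : EuclideanSpace ℝ (Fin n) | ∀ k, 0 ≤ x k} := hR
    have hymem : y ∈ {x : EuclideanSpace ℝ (Fin n) | ∀ k, 0 ≤ x k} := by
      intro k; simpa [hy, hv, sub_eq_add_neg, add_assoc] using hynn k
    have hcomb := hconc.2 hRmem hymem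
      (show (0:ℝ) ≤ 1 - t by linarith [ht.2]) ht.1 (by ring)
    have hpt : (1 - t) • R + t • y = R + t • v := by
      rw [hy]; module
    rw [hpt] at hcomb
    have hyval' : φ y = φ R := by
      rw [hy, hv, ← add_sub_assoc]; exact hyval
    have : (1 - t) * φ R + t * φ y = φ R := by
      rw [hyval']; ring
    rw [smul_eq_mul, smul_eq_mul, this] at hcomb
    simpa using hcomb
  have hinner : (0:ℝ) ≤ inner ℝ (g R) v := deriv_nonneg_of_min hd hmin
  -- compute the inner product
  have hcalc : (inner ℝ (g R) v : ℝ) = (γ * G lam) * g R i - lam * g R j := by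
    rw [hv, inner_sub_right, real_inner_smul_right, real_inner_smul_right,
      EuclideanSpace.inner_single_right, EuclideanSpace.inner_single_right]
    simp only [starRingEnd_apply, star_trivial]
    ring
  rw [hcalc] at hinner
  have hpos : 0 < γ * g R i := mul_pos hγ.1 (hgpos i)
  rw [ge_iff_le, div_le_iff₀ hpos]
  nlinarith [hgpos i, hgpos j]
end

section
/- For the weighted geometric mean trading function φ(R) = ∏ₖ Rₖ^{wₖ} with positive weights summing to 1, the forward exchange function is F(δ) = Rⱼ(1 − Rᵢ^{wᵢ/wⱼ}/(Rᵢ + γδ)^{wᵢ/wⱼ}): i.e., λ = F(δ) satisfies φ(R + γδeᵢ − λeⱼ) = φ(R) and 0 ≤ λ < Rⱼ. -/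
/-- For the weighted geometric mean trading function `φ(R) = ∏ₖ Rₖ^{wₖ}`, the
forward exchange function is `F(δ) = Rⱼ(1 − Rᵢ^{wᵢ/wⱼ}/(Rᵢ + γδ)^{wᵢ/wⱼ})`:
this value satisfies the exchange condition and lies in `[0, Rⱼ)`. -/
theorem geometric_mean_forward_exchange {n : ℕ}
    (γ : ℝ) (hγ : γ ∈ Set.Ioc (0 : ℝ) 1)
    (i j : Fin n) (hij : i ≠ j)
    (R : Fin n → ℝ) (hR : ∀ k, 0 < R k)
    (w : Fin n → ℝ) (hw : ∀ k, 0 < w k) (hwsum : ∑ k, w k = 1)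
    (δ : ℝ) (hδ : 0 ≤ δ)
    (lam : ℝ) (hlam : lam = R j * (1 - R i ^ (w i / w j) / (R i + γ * δ) ^ (w i / w j))) :
    0 ≤ lam ∧ lam < R j ∧
    (∏ k, (R + (Pi.single i (γ * δ) : Fin n → ℝ) - (Pi.single j lam : Fin n → ℝ)) k ^ w k
      = ∏ k, R k ^ w k) := by
  obtain ⟨hγ0, hγ1⟩ := hγ
  set t : ℝ := w i / w j with ht
  have ht0 : (0:ℝ) < t := div_pos (hw i) (hw j)
  have ha : (0:ℝ) < R i := hR i
  have hb : (0:ℝ) < R i + γ * δ := by positivity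
  have hab : R i ≤ R i + γ * δ := by nlinarith
  have hat : (0:ℝ) < R i ^ t := Real.rpow_pos_of_pos ha t
  have hbt : (0:ℝ) < (R i + γ * δ) ^ t := Real.rpow_pos_of_pos hb t
  have hratio_pos : (0:ℝ) < R i ^ t / (R i + γ * δ) ^ t := div_pos hat hbt
  have hratio_le : R i ^ t / (R i + γ * δ) ^ t ≤ 1 := by
    rw [div_le_one hbt]
    exact Real.rpow_le_rpow ha.le hab ht0.le
  have hlam0 : 0 ≤ lam := by
    rw [hlam]
    have := (hR j).le
    nlinarith
  have hlamlt : lam < R j := by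
    rw [hlam]
    nlinarith [hR j]
  refine ⟨hlam0, hlamlt, ?_⟩
  set f : Fin n → ℝ :=
      R + (Pi.single i (γ * δ) : Fin n → ℝ) - (Pi.single j lam : Fin n → ℝ) with hf
  have hfi : f i = R i + γ * δ := by
    simp [hf, Pi.single_eq_of_ne hij]
  have hfj : f j = R j * (R i ^ t / (R i + γ * δ) ^ t) := by
    simp only [hf, Pi.sub_apply, Pi.add_apply, Pi.single_eq_same,
      Pi.single_eq_of_ne (Ne.symm hij)]
    rw [hlam]; ring
  have hfk : ∀ k ∈ Finset.univ \ ({i, j} : Finset (Fin n)), f k = R k := by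
    intro k hk
    simp only [Finset.mem_sdiff, Finset.mem_insert, Finset.mem_singleton] at hk
    push_neg at hk
    simp [hf, Pi.single_eq_of_ne hk.2.1, Pi.single_eq_of_ne hk.2.2]
  have hsub : ({i, j} : Finset (Fin n)) ⊆ Finset.univ := Finset.subset_univ _
  have split : ∀ v : Fin n → ℝ,
      ∏ k, v k ^ w k =
        (∏ k ∈ Finset.univ \ ({i, j} : Finset (Fin n)), v k ^ w k)
          * (v i ^ w i * v j ^ w j) := by
    intro v
    rw [← Finset.prod_sdiff hsub, Finset.prod_pair hij]
  rw [split f, split R]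
  congr 1
  · exact Finset.prod_congr rfl fun k hk => by rw [hfk k hk]
  · rw [hfi, hfj]
    have hwj : w j ≠ 0 := (hw j).ne'
    have hdiv : R i ^ t / (R i + γ * δ) ^ t = (R i / (R i + γ * δ)) ^ t := by
      rw [Real.div_rpow ha.le hb.le]
    have hx : (0:ℝ) ≤ R i / (R i + γ * δ) := by positivity
    rw [hdiv, Real.mul_rpow (hR j).le (Real.rpow_nonneg hx t),
      ← Real.rpow_mul hx, ht, div_mul_cancel₀ _ hwj,
      mul_comm (R j ^ w j), ← mul_assoc, ← Real.mul_rpow hb.le hx,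
      mul_div_cancel₀ _ hb.ne']
end

section
/- Purchase cost bound: if α > 0 satisfies φ(R + γαeₙ − Λ) = φ(R) with Λ ≥ 0, Λₙ = 0, then α ≥ (1/γ)pᵀΛ where p = ∇φ(R)/∇φ(R)ₙ. -/
/-- Purchase cost bound: if `α > 0` satisfies `φ(R + γαeₙ − Λ) = φ(R)` with
`Λ ≥ 0`, `Λₙ = 0`, then `α ≥ (1/γ)·pᵀΛ` where `p = ∇φ(R)/∇φ(R)ₙ`. -/
theorem purchase_cost_bound {n : ℕ}
    (φ : EuclideanSpace ℝ (Fin (n + 1)) → ℝ)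
    (g : EuclideanSpace ℝ (Fin (n + 1)) → EuclideanSpace ℝ (Fin (n + 1)))
    (hconc : ConcaveOn ℝ {x : EuclideanSpace ℝ (Fin (n + 1)) | ∀ i, 0 ≤ x i} φ)
    (hgrad : ∀ x, (∀ i, 0 ≤ x i) → HasGradientAt φ (g x) x)
    (hmono : ∀ x y : EuclideanSpace ℝ (Fin (n + 1)), (∀ i, x i ≤ y i) → φ x ≤ φ y)
    (γ : ℝ) (hγ : γ ∈ Set.Ioc (0 : ℝ) 1)
    (R Λ : EuclideanSpace ℝ (Fin (n + 1)))
    (hR : ∀ i, 0 ≤ R i) (hΛ : ∀ i, 0 ≤ Λ i) (hΛn : Λ (Fin.last n) = 0)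
    (hgn : 0 < g R (Fin.last n))
    (α : ℝ) (hα : 0 < α)
    (hdom : ∀ i, 0 ≤ (R + (γ * α) • EuclideanSpace.single (Fin.last n) (1 : ℝ) - Λ) i)
    (hvalid : φ (R + (γ * α) • EuclideanSpace.single (Fin.last n) (1 : ℝ) - Λ) = φ R) :
    α ≥ (1 / γ) * ∑ i, (g R i / g R (Fin.last n)) * Λ i := by
  set S : Set (EuclideanSpace ℝ (Fin (n + 1))) := {x | ∀ i, 0 ≤ x i} with hS
  set y : EuclideanSpace ℝ (Fin (n + 1)) :=
    R + (γ * α) • EuclideanSpace.single (Fin.last n) (1 : ℝ) - Λ with hy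
  have hyS : y ∈ S := hdom
  have hRS : R ∈ S := hR
  set L : ℝ →ᵃ[ℝ] EuclideanSpace ℝ (Fin (n + 1)) := AffineMap.lineMap R y with hL
  have hL0 : L 0 = R := AffineMap.lineMap_apply_zero R y
  have hL1 : L 1 = y := AffineMap.lineMap_apply_one R y
  -- concavity of ψ = φ ∘ L on [0,1]
  have hψ : ConcaveOn ℝ (Set.Icc (0:ℝ) 1) (φ ∘ L) := by
    refine (hconc.comp_affineMap L).subset ?_ (convex_Icc 0 1)
    intro t ht
    have hseg : L t ∈ segment ℝ R y := by
      rw [segment_eq_image_lineMap]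
      exact ⟨t, ht, rfl⟩
    exact (hconc.1.segment_subset hRS hyS) hseg
  -- derivative of ψ at 0
  have hline : HasDerivAt (fun t : ℝ => L t) (y - R) 0 := by
    have hLt : ∀ t : ℝ, L t = R + t • (y - R) := by
      intro t; simp [hL, AffineMap.lineMap_apply, add_comm]
    simp only [hLt]
    simpa using ((hasDerivAt_id (0:ℝ)).smul_const (y - R)).const_add R
  have hfd : HasFDerivAt φ
      ((InnerProductSpace.toDual ℝ (EuclideanSpace ℝ (Fin (n + 1)))) (g R)) R := hgrad R hR
  have hψd : HasDerivAt (φ ∘ L) (inner ℝ (g R) (y - R) : ℝ) 0 := by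
    have h := hfd.comp_hasDerivAt_of_eq (0 : ℝ) hline hL0.symm
    simpa [InnerProductSpace.toDual_apply_apply] using h
  -- concave slope inequality
  have hconv : ConvexOn ℝ (Set.Icc (0:ℝ) 1) (-(φ ∘ L)) := hψ.neg
  have hslope := hconv.le_slope_of_hasDerivAt (Set.left_mem_Icc.2 zero_le_one)
    (Set.right_mem_Icc.2 zero_le_one) zero_lt_one hψd.neg
  have hψ1 : (φ ∘ L) 1 = (φ ∘ L) 0 := by
    simp only [Function.comp_apply, hL0, hL1]
    exact hvalid
  have hinner_nonneg : (0 : ℝ) ≤ inner ℝ (g R) (y - R) := by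
    have hsl : slope (-(φ ∘ L)) 0 1 = 0 := by
      simp only [slope_def_field, Pi.neg_apply, Function.comp_apply, hL0, hL1]
      rw [hvalid]; ring
    rw [hsl] at hslope
    linarith
  -- compute the inner product
  have hsub : y - R = (γ * α) • EuclideanSpace.single (Fin.last n) (1 : ℝ) - Λ := by
    rw [hy]; abel
  have h1 : (inner ℝ (g R) (EuclideanSpace.single (Fin.last n) (1:ℝ)) : ℝ)
      = g R (Fin.last n) := by
    rw [EuclideanSpace.inner_single_right]; simp
  have h2 : (inner ℝ (g R) Λ : ℝ) = ∑ i, g R i * Λ i := by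
    rw [PiLp.inner_apply]; simp [RCLike.inner_apply, mul_comm]
  have hinner_eq : (inner ℝ (g R) (y - R) : ℝ)
      = γ * α * g R (Fin.last n) - ∑ i, g R i * Λ i := by
    rw [hsub, inner_sub_right, real_inner_smul_right, h1, h2]
  have key : ∑ i, g R i * Λ i ≤ γ * α * g R (Fin.last n) := by
    rw [hinner_eq] at hinner_nonneg; linarith
  -- conclude
  have hsum : ∑ i, (g R i / g R (Fin.last n)) * Λ i
      = (∑ i, g R i * Λ i) / g R (Fin.last n) := by
    rw [Finset.sum_div]
    exact Finset.sum_congr rfl fun i _ => by ring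
  rw [ge_iff_le, hsum, one_div, inv_mul_le_iff₀ hγ.1, div_le_iff₀ hgn]
  linarith [key]
end
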